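/- Let φ_1,...,φ_n ∈ ℂ be nonzero and pairwise distinct, β = 1 - q^{-2}, and let R̂ be the rime solution with β_{ij} = βφ_i/(φ_i-φ_j). Let X = X(φ) be the matrix with entries X^k_j = e_{j-1}(φ_1,...,φ̂_k,...,φ_n). Then R̂ = (X⊗X) R̂_{CG,1} (X^{-1}⊗X^{-1}), where R̂_{CG,1} is the Cremmer–Gervais matrix with p = 1. -/

import Mathlib

open Matrix Kronecker BigOperators Finset

noncomputable section


/-- The rime matrix R̂ on ℂⁿ⊗ℂⁿ with parameters `b i j = β_{ij}` (form (3) of the paper):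
`R̂^{ij}_{kl} = (1-b_{ji})δ^i_l δ^j_k + b_{ij}δ^i_k δ^j_l - b_{ij}δ^i_k δ^i_l + b_{ji}δ^j_k δ^j_l`.
Row index `p = (i,j)` (upper indices), column index `q = (k,l)` (lower indices). -/
def rimeR (n : ℕ) (b : Fin n → Fin n → ℂ) :
    Matrix (Fin n × Fin n) (Fin n × Fin n) ℂ := fun p q =>
  (1 - b p.2 p.1) * (if p.1 = q.2 then 1 else 0) * (if p.2 = q.1 then 1 else 0)
  + b p.1 p.2 * (if p.1 = q.1 then 1 else 0) * (if p.2 = q.2 then 1 else 0)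
  - b p.1 p.2 * (if p.1 = q.1 then 1 else 0) * (if p.1 = q.2 then 1 else 0)
  + b p.2 p.1 * (if p.2 = q.1 then 1 else 0) * (if p.2 = q.2 then 1 else 0)

/-- `β_{ij} = β φ_i / (φ_i - φ_j)` for `i ≠ j`, and `β_{ii} = 0`. -/
def bphi (n : ℕ) (β : ℂ) (φ : Fin n → ℂ) : Fin n → Fin n → ℂ := fun i j =>
  if i = j then 0 else β * φ i / (φ i - φ j)

/-- The Cremmer–Gervais matrix with `p = 1` (rescaled, eigenvalues `1`, `-q⁻²`):
`(R̂_CG)^{ij}_{kl} = q^{-2θ(i>j)} δ^i_l δ^j_k + (1-q⁻²) Σ_{i≤s<j} δ^s_k δ^{i+j-s}_l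
 - (1-q⁻²) Σ_{j<s<i} δ^s_k δ^{i+j-s}_l`.
The conditions `s = k`, `i+j-s = l` are rewritten as `k`-range conditions together with
`i + j = k + l` (as natural numbers, which also makes `δ^{i+j-s}_l` vanish out of range). -/
def cgR (n : ℕ) (q : ℂ) : Matrix (Fin n × Fin n) (Fin n × Fin n) ℂ := fun p r =>
  (if p.2 < p.1 then (q ^ 2)⁻¹ else 1)
      * (if p.1 = r.2 then 1 else 0) * (if p.2 = r.1 then 1 else 0)
  + (1 - (q ^ 2)⁻¹) *
      (if p.1 ≤ r.1 ∧ r.1 < p.2 ∧ (p.1 : ℕ) + (p.2 : ℕ) = (r.1 : ℕ) + (r.2 : ℕ) then 1 else 0)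
  - (1 - (q ^ 2)⁻¹) *
      (if p.2 < r.1 ∧ r.1 < p.1 ∧ (p.1 : ℕ) + (p.2 : ℕ) = (r.1 : ℕ) + (r.2 : ℕ) then 1 else 0)

/-- The matrix `X(φ)` with entries `X^k_j = e_{j-1}(φ_1, …, φ̂_k, …, φ_n)`: row `k`, column `j`
(0-indexed here, so column `j` carries the elementary symmetric polynomial of degree `j`)
in the `n-1` values `φ` with the `k`-th one omitted. -/
def Xmat (n : ℕ) (φ : Fin n → ℂ) : Matrix (Fin n) (Fin n) ℂ := fun k j =>
  (((Finset.univ.erase k).val.map φ).esymm (j : ℕ))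

namespace RimeAux

lemma esymm_zero' (s : Multiset ℂ) : s.esymm 0 = 1 := by
  simp [Multiset.esymm]

lemma esymm_out (s : Multiset ℂ) (m : ℕ) (h : Multiset.card s < m) : s.esymm m = 0 := by
  simp [Multiset.esymm, Multiset.powersetCard_eq_empty _ h]

lemma esymm_cons (a : ℂ) (s : Multiset ℂ) (m : ℕ) :
    (a ::ₘ s).esymm (m + 1) = s.esymm (m + 1) + a * s.esymm m := by
  simp only [Multiset.esymm, Multiset.powersetCard_cons, Multiset.map_add, Multiset.sum_add,
    Multiset.map_map, Function.comp_def, Multiset.prod_cons]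
  rw [← Multiset.sum_map_mul_left]

lemma esymm_gen (s : Multiset ℂ) (x : ℂ) :
    ∑ j ∈ Finset.range (Multiset.card s + 1), s.esymm j * x ^ j
      = (s.map (fun m => 1 + x * m)).prod := by
  induction s using Multiset.induction with
  | empty => simp [esymm_zero']
  | cons a s ih =>
    rw [Multiset.map_cons, Multiset.prod_cons, ← ih]
    rw [Multiset.card_cons, Finset.sum_range_succ' (fun j => (a ::ₘ s).esymm j * x ^ j)]
    simp only [esymm_cons, esymm_zero', pow_zero, mul_one]
    have h1 : ∑ i ∈ Finset.range (Multiset.card s + 1), (s.esymm (i+1) + a * s.esymm i) * x ^ (i+1)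
        = (∑ i ∈ Finset.range (Multiset.card s + 1), s.esymm (i+1) * x ^ (i+1))
          + a * x * ∑ i ∈ Finset.range (Multiset.card s + 1), s.esymm i * x ^ i := by
      rw [Finset.mul_sum, ← Finset.sum_add_distrib]
      refine Finset.sum_congr rfl fun i _ => by ring
    rw [h1]
    have h2 : ∑ i ∈ Finset.range (Multiset.card s + 1), s.esymm (i+1) * x ^ (i+1)
        = (∑ i ∈ Finset.range (Multiset.card s + 1 + 1), s.esymm i * x ^ i) - 1 := by
      rw [Finset.sum_range_succ' (fun j => s.esymm j * x ^ j)]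
      simp [esymm_zero']
    rw [h2, Finset.sum_range_succ, esymm_out s (Multiset.card s + 1) (by omega)]
    ring

variable {n : ℕ} (φ : Fin n → ℂ)

def XE (k : Fin n) (m : ℕ) : ℂ := ((Finset.univ.erase k).val.map φ).esymm m

def YE (i j : Fin n) (m : ℕ) : ℂ := (((Finset.univ.erase i).erase j).val.map φ).esymm m

lemma YE_comm (i j : Fin n) (m : ℕ) : YE φ i j m = YE φ j i m := by
  rw [YE, YE, Finset.erase_right_comm]

lemma XE_zero (k : Fin n) : XE φ k 0 = 1 := esymm_zero' _

lemma YE_zero (i j : Fin n) : YE φ i j 0 = 1 := esymm_zero' _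

lemma card_sk (k : Fin n) : Multiset.card ((Finset.univ.erase k).val.map φ) = n - 1 := by
  rw [Multiset.card_map]
  have : (Finset.univ.erase k).card = n - 1 := by
    rw [Finset.card_erase_of_mem (Finset.mem_univ k), Finset.card_univ, Fintype.card_fin]
  rw [← Finset.card_def]
  exact this

lemma XE_out (k : Fin n) (m : ℕ) (hm : n ≤ m) : XE φ k m = 0 := by
  apply esymm_out
  rw [card_sk]
  have hn : 0 < n := k.pos
  omega

lemma erase_cons (i j : Fin n) (hij : i ≠ j) :
    ((Finset.univ.erase i).val.map φ) = φ j ::ₘ (((Finset.univ.erase i).erase j).val.map φ) := by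
  have hj : j ∈ (Finset.univ.erase i).val :=
    Finset.mem_val.mpr (Finset.mem_erase.mpr ⟨(Ne.symm hij), Finset.mem_univ j⟩)
  conv_lhs => rw [← Multiset.cons_erase hj]
  rw [Multiset.map_cons, Finset.erase_val, Finset.erase_val]
  rfl

lemma XE_succ (i j : Fin n) (hij : i ≠ j) (m : ℕ) :
    XE φ i (m + 1) = YE φ i j (m + 1) + φ j * YE φ i j m := by
  rw [XE, erase_cons φ i j hij, esymm_cons]; rfl

lemma XE_succ' (i j : Fin n) (hij : i ≠ j) (m : ℕ) :
    XE φ j (m + 1) = YE φ i j (m + 1) + φ i * YE φ i j m := by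
  rw [XE_succ φ j i (Ne.symm hij), YE_comm φ j i, YE_comm φ j i]

lemma Dlem (i j : Fin n) (hij : i ≠ j) (m : ℕ) :
    φ i * XE φ i m - φ j * XE φ j m = (φ i - φ j) * YE φ i j m := by
  cases m with
  | zero => rw [XE_zero, XE_zero, YE_zero]; ring
  | succ m => rw [XE_succ φ i j hij, XE_succ' φ i j hij]; ring

lemma telescope (i j : Fin n) (hij : i ≠ j) :
    ∀ (k d c : ℕ), c = k + d + 1 →
      ∑ m ∈ Finset.range (k + 1),
          (XE φ i m * XE φ j (c - m) - XE φ j m * XE φ i (c - m))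
        = (φ i - φ j) * (YE φ i j k * YE φ i j d) := by
  intro k
  induction k with
  | zero =>
    intro d c hc
    subst hc
    simp only [Nat.zero_add, Finset.sum_range_one, Nat.sub_zero, XE_zero, YE_zero]
    rw [XE_succ φ i j hij d, XE_succ' φ i j hij d]
    ring
  | succ k ih =>
    intro d c hc
    subst hc
    rw [Finset.sum_range_succ, ih (d + 1) (k + 1 + d + 1) (by omega)]
    have h1 : k + 1 + d + 1 - (k + 1) = d + 1 := by omega
    rw [h1, XE_succ φ i j hij k, XE_succ' φ i j hij k,
      XE_succ φ i j hij d, XE_succ' φ i j hij d]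
    ring

/-! ### sum conversion lemmas -/

lemma sum_range_delta (N v : ℕ) (Q : Prop) [Decidable Q] (f : ℕ → ℂ) :
    ∑ l ∈ Finset.range N, (if (l = v ∧ Q) then f l else 0)
      = if (v < N ∧ Q) then f v else 0 := by
  by_cases hQ : Q
  · simp only [hQ, and_true]
    simp [Finset.sum_ite_eq', Finset.mem_range]
  · simp [hQ]

lemma sum_range_cut (N M : ℕ) (hMN : M ≤ N) (f : ℕ → ℂ) :
    ∑ u ∈ Finset.range N, (if u < M then f u else 0) = ∑ u ∈ Finset.range M, f u := by
  rw [← Finset.sum_filter]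
  congr 1
  ext u
  simp only [Finset.mem_filter, Finset.mem_range]
  omega

lemma fin_double (P : ℕ → ℕ → Prop) [∀ u v, Decidable (P u v)] (F G : ℕ → ℂ) :
    (∑ k : Fin n, ∑ l : Fin n, if P (k : ℕ) (l : ℕ) then F (k : ℕ) * G (l : ℕ) else 0)
      = ∑ u ∈ Finset.range n, ∑ v ∈ Finset.range n, if P u v then F u * G v else 0 := by
  rw [← Fin.sum_univ_eq_sum_range (fun u => ∑ v ∈ Finset.range n, if P u v then F u * G v else 0) n]
  refine Finset.sum_congr rfl fun k _ => ?_
  rw [← Fin.sum_univ_eq_sum_range (fun v => if P (k : ℕ) v then F (k : ℕ) * G v else 0) n]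

lemma pairsum_one (a b : Fin n) (F G : ℕ → ℂ)
    (hF : ∀ u, n ≤ u → F u = 0) (hG : ∀ u, n ≤ u → G u = 0) :
    (∑ k : Fin n, ∑ l : Fin n,
        if (k ≤ a ∧ a < l ∧ (k : ℕ) + (l : ℕ) = (a : ℕ) + (b : ℕ)) then F (k:ℕ) * G (l:ℕ) else 0)
      = ∑ m ∈ Finset.range (min ((a:ℕ)+1) (b:ℕ)), F m * G ((a:ℕ) + (b:ℕ) - m) := by
  set c := (a : ℕ) + (b : ℕ) with hc
  have h1 : (∑ k : Fin n, ∑ l : Fin n,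
        if (k ≤ a ∧ a < l ∧ (k : ℕ) + (l : ℕ) = c) then F (k:ℕ) * G (l:ℕ) else 0)
      = ∑ u ∈ Finset.range n, ∑ v ∈ Finset.range n,
          if ((u ≤ (a:ℕ) ∧ (a:ℕ) < v ∧ u + v = c)) then F u * G v else 0 := by
    rw [← fin_double (fun u v => u ≤ (a:ℕ) ∧ (a:ℕ) < v ∧ u + v = c) F G]
    refine Finset.sum_congr rfl fun k _ => Finset.sum_congr rfl fun l _ => ?_
    exact if_congr (and_congr Fin.le_def (and_congr Fin.lt_def Iff.rfl)) rfl rfl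
  rw [h1]
  have h2 : ∀ u ∈ Finset.range n,
      (∑ v ∈ Finset.range n, if ((u ≤ (a:ℕ) ∧ (a:ℕ) < v ∧ u + v = c)) then F u * G v else 0)
        = if u < min ((a:ℕ)+1) (b:ℕ) then F u * G (c - u) else 0 := by
    intro u hu
    rw [Finset.mem_range] at hu
    have hcond : ∀ v, (u ≤ (a:ℕ) ∧ (a:ℕ) < v ∧ u + v = c)
        ↔ (v = c - u ∧ (u ≤ (a:ℕ) ∧ (a:ℕ) + u < c)) := by intro v; omega
    rw [Finset.sum_congr rfl (fun v _ => if_congr (hcond v) rfl rfl),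
      sum_range_delta n (c - u) _ (fun v => F u * G v)]
    by_cases hA : u ≤ (a:ℕ) ∧ (a:ℕ) + u < c
    · by_cases hB : c - u < n
      · rw [if_pos ⟨hB, hA⟩, if_pos (by omega)]
      · rw [if_neg (by tauto), if_pos (by omega), hG (c - u) (by omega), mul_zero]
    · rw [if_neg (by tauto), if_neg (by omega)]
  rw [Finset.sum_congr rfl h2, sum_range_cut n (min ((a:ℕ)+1) (b:ℕ)) (by have := b.isLt; omega)]

lemma pairsum_two (a b : Fin n) (F G : ℕ → ℂ)
    (hF : ∀ u, n ≤ u → F u = 0) (hG : ∀ u, n ≤ u → G u = 0) :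
    (∑ k : Fin n, ∑ l : Fin n,
        if (l < a ∧ a < k ∧ (k : ℕ) + (l : ℕ) = (a : ℕ) + (b : ℕ)) then F (k:ℕ) * G (l:ℕ) else 0)
      = ∑ m ∈ Finset.range (min (a:ℕ) (b:ℕ)), F ((a:ℕ) + (b:ℕ) - m) * G m := by
  set c := (a : ℕ) + (b : ℕ) with hc
  set N' := max n (c + 1) with hN'
  have h1 : (∑ k : Fin n, ∑ l : Fin n,
        if (l < a ∧ a < k ∧ (k : ℕ) + (l : ℕ) = c) then F (k:ℕ) * G (l:ℕ) else 0)
      = ∑ u ∈ Finset.range n, ∑ v ∈ Finset.range n,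
          if ((v < (a:ℕ) ∧ (a:ℕ) < u ∧ u + v = c)) then F u * G v else 0 := by
    rw [← fin_double (fun u v => v < (a:ℕ) ∧ (a:ℕ) < u ∧ u + v = c) F G]
    refine Finset.sum_congr rfl fun k _ => Finset.sum_congr rfl fun l _ => ?_
    exact if_congr (and_congr Fin.lt_def (and_congr Fin.lt_def Iff.rfl)) rfl rfl
  rw [h1]
  have h2 : ∀ u ∈ Finset.range n,
      (∑ v ∈ Finset.range n, if ((v < (a:ℕ) ∧ (a:ℕ) < u ∧ u + v = c)) then F u * G v else 0)
        = if ((a:ℕ) < u ∧ c < (a:ℕ) + u ∧ u ≤ c ∧ c - u < n) then F u * G (c - u) else 0 := by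
    intro u hu
    have hcond : ∀ v, (v < (a:ℕ) ∧ (a:ℕ) < u ∧ u + v = c)
        ↔ (v = c - u ∧ ((a:ℕ) < u ∧ c < (a:ℕ) + u ∧ u ≤ c)) := by intro v; omega
    rw [Finset.sum_congr rfl (fun v _ => if_congr (hcond v) rfl rfl),
      sum_range_delta n (c - u) _ (fun v => F u * G v)]
    exact if_congr (by omega) rfl rfl
  rw [Finset.sum_congr rfl h2]
  have h3 : ∑ u ∈ Finset.range n,
        (if ((a:ℕ) < u ∧ c < (a:ℕ) + u ∧ u ≤ c ∧ c - u < n) then F u * G (c - u) else 0)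
      = ∑ u ∈ Finset.range N',
        (if ((a:ℕ) < u ∧ c < (a:ℕ) + u ∧ u ≤ c) then F u * G (c - u) else 0) := by
    rw [Finset.sum_subset (Finset.range_subset_range.mpr (le_max_left n (c+1)))]
    · refine Finset.sum_congr rfl fun u hu => ?_
      by_cases hA : (a:ℕ) < u ∧ c < (a:ℕ) + u ∧ u ≤ c
      · by_cases hB : c - u < n
        · rw [if_pos ⟨hA.1, hA.2.1, hA.2.2, hB⟩, if_pos hA]
        · rw [if_neg (by tauto), if_pos hA, hG (c - u) (by omega), mul_zero]
      · rw [if_neg (by tauto), if_neg hA]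
    · intro u hu hnu
      rw [Finset.mem_range] at hnu
      by_cases hA : (a:ℕ) < u ∧ c < (a:ℕ) + u ∧ u ≤ c ∧ c - u < n
      · rw [if_pos hA, hF u (by omega), zero_mul]
      · rw [if_neg hA]
  rw [h3]
  have h4 : ∑ u ∈ Finset.range N',
        (if ((a:ℕ) < u ∧ c < (a:ℕ) + u ∧ u ≤ c) then F u * G (c - u) else 0)
      = ∑ u ∈ Finset.range (c + 1),
        (if ((a:ℕ) < u ∧ c < (a:ℕ) + u ∧ u ≤ c) then F u * G (c - u) else 0) := by
    rw [Finset.sum_subset (Finset.range_subset_range.mpr (le_max_right n (c+1)))]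
    intro u hu hnu
    rw [Finset.mem_range] at hnu
    rw [if_neg (by omega)]
  rw [h4]
  rw [← Finset.sum_range_reflect
    (fun u => if ((a:ℕ) < u ∧ c < (a:ℕ) + u ∧ u ≤ c) then F u * G (c - u) else 0) (c + 1)]
  have h5 : ∀ m ∈ Finset.range (c + 1),
      (if ((a:ℕ) < (c + 1 - 1 - m) ∧ c < (a:ℕ) + (c + 1 - 1 - m) ∧ (c + 1 - 1 - m) ≤ c)
        then F (c + 1 - 1 - m) * G (c - (c + 1 - 1 - m)) else 0)
      = if m < min (a:ℕ) (b:ℕ) then F (c - m) * G m else 0 := by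
    intro m hm
    rw [Finset.mem_range] at hm
    have he1 : c + 1 - 1 - m = c - m := by omega
    have he2 : c - (c - m) = m := by omega
    rw [he1, he2]
    exact if_congr (by omega) rfl rfl
  rw [Finset.sum_congr rfl h5, sum_range_cut (c+1) (min (a:ℕ) (b:ℕ)) (by omega)]

/-! ### the scalar identity -/

lemma scalar_main (hd : ∀ i j : Fin n, i ≠ j → φ i ≠ φ j) (q : ℂ) (i j a b : Fin n) :
    (1 - bphi n (1 - (q^2)⁻¹) φ j i) * (XE φ j ↑a * XE φ i ↑b)
      + bphi n (1 - (q^2)⁻¹) φ i j * (XE φ i ↑a * XE φ j ↑b)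
      - bphi n (1 - (q^2)⁻¹) φ i j * (XE φ i ↑a * XE φ i ↑b)
      + bphi n (1 - (q^2)⁻¹) φ j i * (XE φ j ↑a * XE φ j ↑b)
    = (if a < b then (q^2)⁻¹ else 1) * (XE φ i ↑b * XE φ j ↑a)
      + (1 - (q^2)⁻¹) * ∑ m ∈ Finset.range (min ((a:ℕ)+1) (b:ℕ)),
          XE φ i m * XE φ j ((a:ℕ) + (b:ℕ) - m)
      - (1 - (q^2)⁻¹) * ∑ m ∈ Finset.range (min (a:ℕ) (b:ℕ)),
          XE φ i ((a:ℕ) + (b:ℕ) - m) * XE φ j m := by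
  by_cases hij : i = j
  · subst hij
    simp only [bphi, if_pos rfl]
    by_cases hab : (a:ℕ) < (b:ℕ)
    · rw [show min ((a:ℕ)+1) (b:ℕ) = (a:ℕ)+1 from by omega,
        show min (a:ℕ) (b:ℕ) = (a:ℕ) from by omega,
        if_pos (show a < b from hab), Finset.sum_range_succ,
        show (a:ℕ)+(b:ℕ)-(a:ℕ) = (b:ℕ) from by omega]
      have hcomm : ∑ m ∈ Finset.range (a:ℕ), XE φ i ((a:ℕ)+(b:ℕ)-m) * XE φ i m
          = ∑ m ∈ Finset.range (a:ℕ), XE φ i m * XE φ i ((a:ℕ)+(b:ℕ)-m) :=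
        Finset.sum_congr rfl fun m _ => mul_comm _ _
      rw [hcomm]
      ring
    · rw [show min ((a:ℕ)+1) (b:ℕ) = min (a:ℕ) (b:ℕ) from by omega,
        if_neg (show ¬ a < b from fun h => hab h)]
      have hcomm : ∑ m ∈ Finset.range (min (a:ℕ) (b:ℕ)), XE φ i ((a:ℕ)+(b:ℕ)-m) * XE φ i m
          = ∑ m ∈ Finset.range (min (a:ℕ) (b:ℕ)), XE φ i m * XE φ i ((a:ℕ)+(b:ℕ)-m) :=
        Finset.sum_congr rfl fun m _ => mul_comm _ _
      rw [hcomm]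
      ring
  · have hne : φ i - φ j ≠ 0 := sub_ne_zero.mpr (hd i j hij)
    have hne' : φ j - φ i ≠ 0 := sub_ne_zero.mpr (hd j i (Ne.symm hij))
    simp only [bphi, if_neg hij, if_neg (Ne.symm hij)]
    by_cases hb0 : (b:ℕ) = 0
    · rw [hb0]
      rw [show min ((a:ℕ)+1) 0 = 0 from by omega, show min (a:ℕ) 0 = 0 from by omega,
        if_neg (show ¬ a < b from by rw [Fin.lt_def]; omega)]
      simp only [Finset.range_zero, Finset.sum_empty, XE_zero]
      ring
    · obtain ⟨b', hb'⟩ : ∃ b', (b:ℕ) = b' + 1 := ⟨(b:ℕ)-1, by omega⟩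
      rw [hb']
      have hD := Dlem φ i j hij (a:ℕ)
      by_cases hab : (a:ℕ) < (b:ℕ)
      · have htel := telescope φ i j hij (a:ℕ) b' ((a:ℕ)+(b'+1)) (by omega)
        rw [Finset.sum_sub_distrib] at htel
        rw [show min ((a:ℕ)+1) (b'+1) = (a:ℕ)+1 from by omega,
          show min (a:ℕ) (b'+1) = (a:ℕ) from by omega,
          if_pos (show a < b from hab)]
        have hS1 : ∑ m ∈ Finset.range ((a:ℕ)+1), XE φ i m * XE φ j ((a:ℕ)+(b'+1)-m)
            = (φ i - φ j) * (YE φ i j ↑a * YE φ i j b')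
              + ∑ m ∈ Finset.range ((a:ℕ)+1), XE φ j m * XE φ i ((a:ℕ)+(b'+1)-m) := by
          rw [← htel]; ring
        rw [hS1, Finset.sum_range_succ, show (a:ℕ)+(b'+1)-(a:ℕ) = b'+1 from by omega]
        have hcomm : ∑ m ∈ Finset.range (a:ℕ), XE φ i ((a:ℕ)+(b'+1)-m) * XE φ j m
            = ∑ m ∈ Finset.range (a:ℕ), XE φ j m * XE φ i ((a:ℕ)+(b'+1)-m) :=
          Finset.sum_congr rfl fun m _ => mul_comm _ _
        rw [hcomm]
        rw [show (φ i - φ j) * (YE φ i j ↑a * YE φ i j b')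
            = (φ i * XE φ i ↑a - φ j * XE φ j ↑a) * YE φ i j b' from by rw [hD]; ring]
        rw [XE_succ φ i j hij b', XE_succ' φ i j hij b']
        field_simp
        ring
      · have htel := telescope φ i j hij b' (a:ℕ) ((a:ℕ)+(b'+1)) (by omega)
        rw [Finset.sum_sub_distrib] at htel
        rw [show min ((a:ℕ)+1) (b'+1) = b'+1 from by omega,
          show min (a:ℕ) (b'+1) = b'+1 from by omega,
          if_neg (show ¬ a < b from fun h => hab h)]
        have hS1 : ∑ m ∈ Finset.range (b'+1), XE φ i m * XE φ j ((a:ℕ)+(b'+1)-m)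
            = (φ i - φ j) * (YE φ i j b' * YE φ i j ↑a)
              + ∑ m ∈ Finset.range (b'+1), XE φ j m * XE φ i ((a:ℕ)+(b'+1)-m) := by
          rw [← htel]; ring
        rw [hS1]
        have hcomm : ∑ m ∈ Finset.range (b'+1), XE φ i ((a:ℕ)+(b'+1)-m) * XE φ j m
            = ∑ m ∈ Finset.range (b'+1), XE φ j m * XE φ i ((a:ℕ)+(b'+1)-m) :=
          Finset.sum_congr rfl fun m _ => mul_comm _ _
        rw [hcomm]
        rw [show (φ i - φ j) * (YE φ i j b' * YE φ i j ↑a)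
            = (φ i * XE φ i ↑a - φ j * XE φ j ↑a) * YE φ i j b' from by rw [hD]; ring]
        rw [XE_succ φ i j hij b', XE_succ' φ i j hij b']
        field_simp
        ring

/-! ### entry collapse lemmas -/

lemma entryL (B : Fin n → Fin n → ℂ) (X : Matrix (Fin n) (Fin n) ℂ) (i j a b : Fin n) :
    (rimeR n B * (X ⊗ₖ X)) (i,j) (a,b)
      = (1 - B j i) * (X j a * X i b) + B i j * (X i a * X j b)
        - B i j * (X i a * X i b) + B j i * (X j a * X j b) := by
  rw [Matrix.mul_apply, Fintype.sum_prod_type]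
  simp only [rimeR, kroneckerMap_apply, ite_mul, mul_ite, zero_mul, mul_zero, one_mul, mul_one,
    add_mul, sub_mul, Finset.sum_add_distrib, Finset.sum_sub_distrib,
    Finset.sum_ite_irrel, Finset.sum_const_zero, Finset.sum_ite_eq, Finset.sum_ite_eq',
    Finset.mem_univ, if_true]

lemma entryR (qq : ℂ) (X : Matrix (Fin n) (Fin n) ℂ) (i j a b : Fin n) :
    ((X ⊗ₖ X) * cgR n qq) (i,j) (a,b)
      = (if a < b then (qq ^ 2)⁻¹ else 1) * (X i b * X j a)
      + (1 - (qq ^ 2)⁻¹) * (∑ k : Fin n, ∑ l : Fin n,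
          if (k ≤ a ∧ a < l ∧ (k : ℕ) + (l : ℕ) = (a : ℕ) + (b : ℕ)) then X i k * X j l else 0)
      - (1 - (qq ^ 2)⁻¹) * (∑ k : Fin n, ∑ l : Fin n,
          if (l < a ∧ a < k ∧ (k : ℕ) + (l : ℕ) = (a : ℕ) + (b : ℕ)) then X i k * X j l else 0) := by
  rw [Matrix.mul_apply, Fintype.sum_prod_type]
  simp only [cgR, kroneckerMap_apply, ite_mul, mul_ite, zero_mul, mul_zero, one_mul, mul_one,
    mul_add, mul_sub, Finset.sum_add_distrib, Finset.sum_sub_distrib, Finset.mul_sum,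
    Finset.sum_ite_irrel, Finset.sum_const_zero, Finset.sum_ite_eq, Finset.sum_ite_eq',
    Finset.mem_univ, if_true]
  refine congrArg₂ (· - ·) (congrArg₂ (· + ·) (by split <;> ring) ?_) ?_ <;>
    exact Finset.sum_congr rfl fun k _ => Finset.sum_congr rfl fun l _ => by split <;> ring

/-! ### invertibility of X -/

lemma Xdet (h0 : ∀ i, φ i ≠ 0) (hd : ∀ i j : Fin n, i ≠ j → φ i ≠ φ j) :
    IsUnit (Xmat n φ).det := by
  classical
  set Bm : Matrix (Fin n) (Fin n) ℂ := fun j l => (-(φ l)⁻¹) ^ (j : ℕ) with hBm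
  set d : Fin n → ℂ := fun k => ∏ m ∈ Finset.univ.erase k, (1 + -(φ k)⁻¹ * φ m) with hdd
  have key2 : Xmat n φ * Bm = Matrix.diagonal d := by
    ext k l
    rw [Matrix.mul_apply]
    have hn1 : n - 1 + 1 = n := by have := k.pos; omega
    have e1 : ∑ x : Fin n, Xmat n φ k x * Bm x l
        = ∑ u ∈ Finset.range n, XE φ k u * (-(φ l)⁻¹) ^ u := by
      rw [← Fin.sum_univ_eq_sum_range (fun u => XE φ k u * (-(φ l)⁻¹) ^ u) n]
      rfl
    have e2 : ∑ u ∈ Finset.range n, XE φ k u * (-(φ l)⁻¹) ^ u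
        = ∏ m ∈ Finset.univ.erase k, (1 + -(φ l)⁻¹ * φ m) := by
      have e2' := esymm_gen ((Finset.univ.erase k).val.map φ) (-(φ l)⁻¹)
      rw [card_sk φ k, hn1, Multiset.map_map] at e2'
      exact e2'
    rw [e1, e2, Matrix.diagonal_apply]
    by_cases hkl : k = l
    · subst hkl
      rw [if_pos rfl]
    · rw [if_neg hkl]
      refine Finset.prod_eq_zero (Finset.mem_erase.mpr ⟨fun h => hkl h.symm, Finset.mem_univ l⟩) ?_
      rw [neg_mul, inv_mul_cancel₀ (h0 l)]
      ring
  have hdk : ∀ k, d k ≠ 0 := by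
    intro k
    rw [hdd]
    refine Finset.prod_ne_zero_iff.mpr fun m hm heq => ?_
    have hmk : m ≠ k := (Finset.mem_erase.mp hm).1
    apply hd m k hmk
    have h4 : (φ k)⁻¹ * φ m = 1 := by linear_combination -heq
    field_simp [h0 k] at h4
    first | exact h4 | exact h4.symm
  have hprod : (Xmat n φ).det * Bm.det = ∏ k, d k := by
    rw [← Matrix.det_mul, key2, Matrix.det_diagonal]
  have hne : (Xmat n φ).det ≠ 0 := by
    intro h
    have : (0 : ℂ) = ∏ k, d k := by rw [← hprod, h, zero_mul]
    exact (Finset.prod_ne_zero_iff.mpr fun k _ => hdk k) this.symm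
  exact isUnit_iff_ne_zero.mpr hne

end RimeAux

/-- The rime solution with `β_{ij} = β φ_i/(φ_i-φ_j)`, `β = 1 - q⁻²`, is conjugate to the
Cremmer–Gervais matrix: `R̂ = (X ⊗ X) R̂_{CG,1} (X⁻¹ ⊗ X⁻¹)` where `X = X(φ)`. -/
theorem rime_eq_conj_cg (n : ℕ) (φ : Fin n → ℂ) (q : ℂ) (hq : q ≠ 0)
    (h0 : ∀ i, φ i ≠ 0) (hd : ∀ i j, i ≠ j → φ i ≠ φ j) :
    rimeR n (bphi n (1 - (q ^ 2)⁻¹) φ)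
      = (Xmat n φ ⊗ₖ Xmat n φ) * cgR n q * ((Xmat n φ)⁻¹ ⊗ₖ (Xmat n φ)⁻¹) := by
  classical
  have hXe : ∀ (k l : Fin n), Xmat n φ k l = RimeAux.XE φ k ↑l := fun k l => rfl
  have key : rimeR n (bphi n (1 - (q ^ 2)⁻¹) φ) * (Xmat n φ ⊗ₖ Xmat n φ)
      = (Xmat n φ ⊗ₖ Xmat n φ) * cgR n q := by
    ext p r
    obtain ⟨i, j⟩ := p
    obtain ⟨a, b⟩ := r
    rw [RimeAux.entryL, RimeAux.entryR]
    simp only [hXe]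
    rw [RimeAux.pairsum_one a b (RimeAux.XE φ i) (RimeAux.XE φ j)
        (RimeAux.XE_out φ i) (RimeAux.XE_out φ j),
      RimeAux.pairsum_two a b (RimeAux.XE φ i) (RimeAux.XE φ j)
        (RimeAux.XE_out φ i) (RimeAux.XE_out φ j)]
    exact RimeAux.scalar_main φ hd q i j a b
  have hdet := RimeAux.Xdet φ h0 hd
  have hinv : Xmat n φ * (Xmat n φ)⁻¹ = 1 := Matrix.mul_nonsing_inv _ hdet
  have hstep : (Xmat n φ ⊗ₖ Xmat n φ) * cgR n q * ((Xmat n φ)⁻¹ ⊗ₖ (Xmat n φ)⁻¹)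
      = rimeR n (bphi n (1 - (q ^ 2)⁻¹) φ)
        * ((Xmat n φ ⊗ₖ Xmat n φ) * ((Xmat n φ)⁻¹ ⊗ₖ (Xmat n φ)⁻¹)) := by
    rw [← key, Matrix.mul_assoc]
  rw [hstep, ← Matrix.mul_kronecker_mul, hinv, Matrix.one_kronecker_one, Matrix.mul_one]
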